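/- Let X be locally compact, Hausdorff, second countable, μ a Radon measure, and F a measurable function on X. If there exists a dense (in the inductive limit sense) countable family (f_k) in C_c(X, ℝ) with F f_k ∈ L¹(X, μ) and ∫ F f_k dμ = 0 for all k, then F is locally integrable on X. -/
import Mathlib


open MeasureTheory

/-- If `X` is locally compact, Hausdorff, second countable, `μ` a Radon measure,
`F` measurable, and there is a countable family `(f_k)` in `C_c(X, ℝ)` which is
dense in the inductive-limit sense (every `f ∈ C_c(X,ℝ)` is a uniform limit of a
subsequence of `(f_k)` with supports in a common compact set), such that
`F f_k ∈ L¹(X, μ)` with `∫ F f_k dμ = 0` for all `k`, then `F` is locally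
integrable: every point has an open neighbourhood on which `|F|` has finite
integral. -/
theorem vanishing_integrals_implies_locally_integrable
    {X : Type*} [TopologicalSpace X] [LocallyCompactSpace X] [T2Space X]
    [SecondCountableTopology X] [MeasurableSpace X] [BorelSpace X]
    (μ : Measure X) [μ.Regular]
    (F : X → ℂ) (hF : Measurable F)
    (fk : ℕ → X → ℝ)
    (hfk : ∀ k, Continuous (fk k) ∧ HasCompactSupport (fk k))
    (hdense : ∀ f : X → ℝ, Continuous f → HasCompactSupport f →
      ∃ Kc : Set X, IsCompact Kc ∧ ∃ ψ : ℕ → ℕ,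
        (∀ n, tsupport (fk (ψ n)) ⊆ Kc) ∧
        TendstoUniformly (fun n => fk (ψ n)) f Filter.atTop)
    (hint : ∀ k, Integrable (fun x => F x * (fk k x : ℂ)) μ ∧
      ∫ x, F x * (fk k x : ℂ) ∂μ = 0) :
    ∀ x : X, ∃ U : Set X, IsOpen U ∧ x ∈ U ∧ IntegrableOn F U μ := by
  intro x
  -- pick a compact neighborhood K of x
  obtain ⟨K, hK_comp, hK_mem⟩ := exists_compact_mem_nhds x
  -- Urysohn function equal to 1 on K
  obtain ⟨f, hf1, -, hf_supp, -⟩ :=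
    exists_continuous_one_zero_of_isCompact hK_comp isClosed_empty (Set.disjoint_empty K)
  -- approximate f by the family
  obtain ⟨Kc, -, ψ, -, hconv⟩ := hdense f f.continuous hf_supp
  rw [Metric.tendstoUniformly_iff] at hconv
  obtain ⟨N, hN⟩ := (hconv (1/2) (by norm_num)).exists
  -- on K, `fk (ψ N)` is at least 1/2
  have hge : ∀ y ∈ K, (1:ℝ)/2 ≤ |fk (ψ N) y| := by
    intro y hy
    have h1 : f y = 1 := hf1 hy
    have := hN y
    rw [h1] at this
    have h2 : |1 - fk (ψ N) y| < 1/2 := by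
      simpa [Real.dist_eq] using this
    cases abs_lt.1 h2 with
    | intro hl hr =>
      have : (1:ℝ)/2 < fk (ψ N) y := by linarith
      calc (1:ℝ)/2 ≤ fk (ψ N) y := le_of_lt this
        _ ≤ |fk (ψ N) y| := le_abs_self _
  refine ⟨interior K, isOpen_interior, mem_interior_iff_mem_nhds.2 hK_mem, ?_⟩
  have hint' := (hint (ψ N)).1
  have h2int : Integrable (fun y => (2:ℂ) * (F y * (fk (ψ N) y : ℂ))) μ := hint'.const_mul 2
  have hmeas : AEStronglyMeasurable F (μ.restrict (interior K)) :=
    hF.aestronglyMeasurable.restrict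
  refine Integrable.mono (h2int.restrict (s := interior K)) hmeas ?_
  rw [ae_restrict_iff' isOpen_interior.measurableSet]
  refine Filter.Eventually.of_forall fun y hy => ?_
  have h := hge y (interior_subset hy)
  have : ‖(2:ℂ) * (F y * (fk (ψ N) y : ℂ))‖ = 2 * (‖F y‖ * |fk (ψ N) y|) := by
    simp [norm_mul, Real.norm_eq_abs]
  rw [this]
  nlinarith [norm_nonneg (F y), abs_nonneg (fk (ψ N) y)]
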